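/- For every x ∈ [3/8, 11/27), one has σ²(x) < σ²(c). -/

import Mathlib

open scoped BigOperators

/-- `V x ξ = min x ξ - x * ξ`. -/
noncomputable def V (x ξ : ℝ) : ℝ := min x ξ - x * ξ

/-- `σ²(x) = V(⟨x⟩, ⟨x⟩) + 2 ∑_{k=1}^∞ 6^{-k} V(⟨2^k x⟩, ⟨3^k x⟩)`. -/
noncomputable def sigmaSq (x : ℝ) : ℝ :=
  V (Int.fract x) (Int.fract x) +
    2 * ∑' k : ℕ, (1 / 6 ^ (k + 1) : ℝ) *
      V (Int.fract ((2 : ℝ) ^ (k + 1) * x)) (Int.fract ((3 : ℝ) ^ (k + 1) * x))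

/-- `c = 277/665 = 277/(3^6 - 2^6)`. -/
noncomputable def c : ℝ := 277 / 665


lemma fract_shift (p : ℝ) (m : ℤ) (h1 : (m:ℝ) ≤ p) (h2 : p < m + 1) :
    Int.fract p = p - m := by
  have hm : ⌊p⌋ = m := by
    rw [Int.floor_eq_iff]; constructor
    · exact h1
    · push_cast; exact h2
  rw [Int.fract, hm]

lemma V_fract_le (p q pl pu ql qu : ℝ) (m n : ℤ)
    (hp1 : (m:ℝ) + pl ≤ p) (hp2 : p < m + pu) (hpl : 0 ≤ pl) (hpu : pu ≤ 1)
    (hq1 : (n:ℝ) + ql ≤ q) (hq2 : q < n + qu) (hql : 0 ≤ ql) (hqu : qu ≤ 1) :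
    V (Int.fract p) (Int.fract q) ≤ min pu qu - pl * ql := by
  have hfp : Int.fract p = p - m := fract_shift _ _ (by linarith) (by linarith)
  have hfq : Int.fract q = q - n := fract_shift _ _ (by linarith) (by linarith)
  rw [V, hfp, hfq]
  have h1 : min (p - m) (q - n) ≤ min pu qu :=
    min_le_min (by linarith) (by linarith)
  have h2 : pl * ql ≤ (p - (m:ℝ)) * (q - n) :=
    mul_le_mul (by linarith) (by linarith) hql (by linarith)
  linarith

lemma V_fract_nonneg (a b : ℝ) : 0 ≤ V (Int.fract a) (Int.fract b) := by
  have h1 := Int.fract_nonneg a; have h2 := Int.fract_nonneg b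
  have h3 := Int.fract_lt_one a; have h4 := Int.fract_lt_one b
  rw [V]
  rcases le_total (Int.fract a) (Int.fract b) with h | h
  · rw [min_eq_left h]; nlinarith
  · rw [min_eq_right h]; nlinarith

lemma V_fract_le_quarter (a b : ℝ) : V (Int.fract a) (Int.fract b) ≤ 1/4 := by
  have h1 := Int.fract_nonneg a; have h2 := Int.fract_nonneg b
  have h3 := Int.fract_lt_one a; have h4 := Int.fract_lt_one b
  rw [V]
  rcases le_total (Int.fract a) (Int.fract b) with h | h
  · rw [min_eq_left h]
    nlinarith [sq_nonneg (Int.fract a - 1/2)]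
  · rw [min_eq_right h]
    nlinarith [sq_nonneg (Int.fract b - 1/2)]

lemma summable_term (x : ℝ) : Summable (fun k : ℕ =>
    (1 / 6 ^ (k + 1) : ℝ) * V (Int.fract ((2:ℝ)^(k+1) * x)) (Int.fract ((3:ℝ)^(k+1) * x))) := by
  apply Summable.of_nonneg_of_le
    (fun k => mul_nonneg (by positivity) (V_fract_nonneg _ _))
    (fun k => ?_)
    ((summable_geometric_of_lt_one (by norm_num) (by norm_num : (1/6:ℝ) < 1)).mul_left (1/6))
  calc (1 / 6 ^ (k + 1) : ℝ) * V (Int.fract ((2:ℝ)^(k+1) * x)) (Int.fract ((3:ℝ)^(k+1) * x))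
      ≤ (1 / 6 ^ (k + 1) : ℝ) * 1 := by
        apply mul_le_mul_of_nonneg_left _ (by positivity)
        exact le_trans (V_fract_le_quarter _ _) (by norm_num)
    _ ≤ 1/6 * (1/6:ℝ)^k := by
        rw [mul_one, pow_succ]
        rw [one_div, mul_inv, ← one_div, ← one_div]
        rw [one_div_pow]
        ring_nf
        exact le_refl _

lemma sigmaSq_upper (x : ℝ) :
    sigmaSq x ≤ V (Int.fract x) (Int.fract x)
      + 2 * (∑ k ∈ Finset.range 5, (1 / 6 ^ (k + 1) : ℝ) *
          V (Int.fract ((2:ℝ)^(k+1) * x)) (Int.fract ((3:ℝ)^(k+1) * x)))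
      + 1/77760 := by
  have hs := summable_term x
  have split : (∑' k : ℕ, (1 / 6 ^ (k + 1) : ℝ) *
        V (Int.fract ((2:ℝ)^(k+1) * x)) (Int.fract ((3:ℝ)^(k+1) * x)))
      = (∑ k ∈ Finset.range 5, (1 / 6 ^ (k + 1) : ℝ) *
          V (Int.fract ((2:ℝ)^(k+1) * x)) (Int.fract ((3:ℝ)^(k+1) * x)))
        + ∑' k : ℕ, (1 / 6 ^ (k + 6) : ℝ) *
            V (Int.fract ((2:ℝ)^(k+6) * x)) (Int.fract ((3:ℝ)^(k+6) * x)) := by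
    rw [← Summable.sum_add_tsum_nat_add 5 hs]
  have hgs : Summable (fun k : ℕ => (1/6:ℝ)^(k+6) * (1/4)) := by
    apply Summable.mul_right
    exact (summable_nat_add_iff (f := fun k : ℕ => (1/6:ℝ)^k) 6).2
      (summable_geometric_of_lt_one (by norm_num) (by norm_num : (1/6:ℝ)<1))
  have tail : (∑' k : ℕ, (1 / 6 ^ (k + 6) : ℝ) *
      V (Int.fract ((2:ℝ)^(k+6) * x)) (Int.fract ((3:ℝ)^(k+6) * x))) ≤ 1/155520 := by
    have hts : Summable (fun k : ℕ => (1 / 6 ^ (k + 6) : ℝ) *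
        V (Int.fract ((2:ℝ)^(k+6) * x)) (Int.fract ((3:ℝ)^(k+6) * x))) :=
      (summable_nat_add_iff (f := fun k : ℕ => (1 / 6 ^ (k + 1) : ℝ) *
        V (Int.fract ((2:ℝ)^(k+1) * x)) (Int.fract ((3:ℝ)^(k+1) * x))) 5).2 hs
    have h1 : (∑' k : ℕ, (1 / 6 ^ (k + 6) : ℝ) *
        V (Int.fract ((2:ℝ)^(k+6) * x)) (Int.fract ((3:ℝ)^(k+6) * x)))
        ≤ ∑' k : ℕ, (1/6:ℝ)^(k+6) * (1/4) := by
      apply Summable.tsum_le_tsum _ hts hgs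
      intro k
      have hq := V_fract_le_quarter ((2:ℝ)^(k+6) * x) ((3:ℝ)^(k+6) * x)
      have he : (1 / 6 ^ (k + 6) : ℝ) = (1/6:ℝ)^(k+6) := by
        rw [one_div_pow]
      rw [he]
      exact mul_le_mul_of_nonneg_left hq (by positivity)
    have h2 : (∑' k : ℕ, (1/6:ℝ)^(k+6) * (1/4)) = 1/155520 := by
      have h3 : ∀ k : ℕ, ((1/6:ℝ)^(k+6) * (1/4)) = (1/6:ℝ)^k * (1/186624) := by
        intro k; rw [pow_add]; ring_nf
      rw [tsum_congr h3, tsum_mul_right, tsum_geometric_of_lt_one (by norm_num) (by norm_num)]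
      norm_num
    linarith
  rw [sigmaSq, split]
  linarith


lemma c_lower : (153629513/573123600 : ℝ) ≤ sigmaSq c := by
  rw [sigmaSq]
  have hs := summable_term c
  have hsum := Summable.sum_le_tsum (Finset.range 6)
    (fun i _ => mul_nonneg (by positivity) (V_fract_nonneg _ _)) hs
  have g0 : Int.fract ((277:ℝ)/665) = 277/665 :=
    Int.fract_eq_self.mpr ⟨by norm_num, by norm_num⟩
  have g1 : Int.fract ((554:ℝ)/665) = 554/665 :=
    Int.fract_eq_self.mpr ⟨by norm_num, by norm_num⟩
  have g2 : Int.fract ((1108:ℝ)/665) = 443/665 := by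
    rw [fract_shift _ 1 (by norm_num) (by norm_num)]; norm_num
  have g3 : Int.fract ((2216:ℝ)/665) = 221/665 := by
    rw [fract_shift _ 3 (by norm_num) (by norm_num)]; norm_num
  have g4 : Int.fract ((4432:ℝ)/665) = 442/665 := by
    rw [fract_shift _ 6 (by norm_num) (by norm_num)]; norm_num
  have g5 : Int.fract ((8864:ℝ)/665) = 219/665 := by
    rw [fract_shift _ 13 (by norm_num) (by norm_num)]; norm_num
  have g6 : Int.fract ((17728:ℝ)/665) = 438/665 := by
    rw [fract_shift _ 26 (by norm_num) (by norm_num)]; norm_num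
  have g7 : Int.fract ((831:ℝ)/665) = 166/665 := by
    rw [fract_shift _ 1 (by norm_num) (by norm_num)]; norm_num
  have g8 : Int.fract ((2493:ℝ)/665) = 498/665 := by
    rw [fract_shift _ 3 (by norm_num) (by norm_num)]; norm_num
  have g9 : Int.fract ((7479:ℝ)/665) = 164/665 := by
    rw [fract_shift _ 11 (by norm_num) (by norm_num)]; norm_num
  have g10 : Int.fract ((22437:ℝ)/665) = 492/665 := by
    rw [fract_shift _ 33 (by norm_num) (by norm_num)]; norm_num
  have g11 : Int.fract ((67311:ℝ)/665) = 146/665 := by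
    rw [fract_shift _ 101 (by norm_num) (by norm_num)]; norm_num
  have g12 : Int.fract ((201933:ℝ)/665) = 438/665 := by
    rw [fract_shift _ 303 (by norm_num) (by norm_num)]; norm_num
  have hS : (∑ k ∈ Finset.range 6, (1 / 6 ^ (k + 1) : ℝ) *
      V (Int.fract ((2:ℝ)^(k+1) * c)) (Int.fract ((3:ℝ)^(k+1) * c)))
      = 14340617/1146247200 := by
    rw [show c = (277:ℝ)/665 from rfl]
    rw [Finset.sum_range_succ, Finset.sum_range_succ, Finset.sum_range_succ,
      Finset.sum_range_succ, Finset.sum_range_succ, Finset.sum_range_one]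
    norm_num [V, min_def]
  have hV : V (Int.fract c) (Int.fract c) = 107476/442225 := by
    rw [show c = (277:ℝ)/665 from rfl, g0]
    norm_num [V, min_self]
  rw [hS] at hsum
  rw [hV]
  linarith

set_option maxHeartbeats 2000000 in
lemma piece_lt (x A B : ℝ) (m1 n1 m2 n2 m3 n3 m4 n4 m5 n5 : ℤ)
    (hA : A ≤ x) (hB : x < B)
    (h : 0 ≤ A ∧ B ≤ 1 ∧
      (m1:ℝ) ≤ 2*A ∧ 2*B ≤ m1+1 ∧ (n1:ℝ) ≤ 3*A ∧ 3*B ≤ n1+1 ∧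
      (m2:ℝ) ≤ 4*A ∧ 4*B ≤ m2+1 ∧ (n2:ℝ) ≤ 9*A ∧ 9*B ≤ n2+1 ∧
      (m3:ℝ) ≤ 8*A ∧ 8*B ≤ m3+1 ∧ (n3:ℝ) ≤ 27*A ∧ 27*B ≤ n3+1 ∧
      (m4:ℝ) ≤ 16*A ∧ 16*B ≤ m4+1 ∧ (n4:ℝ) ≤ 81*A ∧ 81*B ≤ n4+1 ∧
      (m5:ℝ) ≤ 32*A ∧ 32*B ≤ m5+1 ∧ (n5:ℝ) ≤ 243*A ∧ 243*B ≤ n5+1 ∧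
      B - A*A
        + 2*((min (2*B-(m1:ℝ)) (3*B-(n1:ℝ)) - (2*A-m1)*(3*A-n1))/6
           + (min (4*B-(m2:ℝ)) (9*B-(n2:ℝ)) - (4*A-m2)*(9*A-n2))/36
           + (min (8*B-(m3:ℝ)) (27*B-(n3:ℝ)) - (8*A-m3)*(27*A-n3))/216
           + (min (16*B-(m4:ℝ)) (81*B-(n4:ℝ)) - (16*A-m4)*(81*A-n4))/1296
           + (min (32*B-(m5:ℝ)) (243*B-(n5:ℝ)) - (32*A-m5)*(243*A-n5))/7776)
        + 1/77760 < 153629513/573123600) :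
    sigmaSq x < sigmaSq c := by
  obtain ⟨hA0, hB1, p1a,p1b,q1a,q1b, p2a,p2b,q2a,q2b, p3a,p3b,q3a,q3b,
    p4a,p4b,q4a,q4b, p5a,p5b,q5a,q5b, hfin⟩ := h
  have hub := sigmaSq_upper x
  rw [Finset.sum_range_succ, Finset.sum_range_succ, Finset.sum_range_succ,
    Finset.sum_range_succ, Finset.sum_range_one] at hub
  norm_num at hub
  have B0 : V (Int.fract x) (Int.fract x) ≤ min B B - A*A :=
    V_fract_le x x A B A B 0 0 (by push_cast; linarith) (by push_cast; linarith)
      hA0 hB1 (by push_cast; linarith) (by push_cast; linarith) hA0 hB1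
  rw [min_self] at B0
  have B1 : V (Int.fract (2*x)) (Int.fract (3*x))
      ≤ min (2*B-(m1:ℝ)) (3*B-(n1:ℝ)) - (2*A-m1)*(3*A-n1) :=
    V_fract_le (2*x) (3*x) (2*A-m1) (2*B-m1) (3*A-n1) (3*B-n1) m1 n1
      (by linarith) (by linarith) (by linarith) (by linarith)
      (by linarith) (by linarith) (by linarith) (by linarith)
  have B2 : V (Int.fract (4*x)) (Int.fract (9*x))
      ≤ min (4*B-(m2:ℝ)) (9*B-(n2:ℝ)) - (4*A-m2)*(9*A-n2) :=
    V_fract_le (4*x) (9*x) (4*A-m2) (4*B-m2) (9*A-n2) (9*B-n2) m2 n2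
      (by linarith) (by linarith) (by linarith) (by linarith)
      (by linarith) (by linarith) (by linarith) (by linarith)
  have B3 : V (Int.fract (8*x)) (Int.fract (27*x))
      ≤ min (8*B-(m3:ℝ)) (27*B-(n3:ℝ)) - (8*A-m3)*(27*A-n3) :=
    V_fract_le (8*x) (27*x) (8*A-m3) (8*B-m3) (27*A-n3) (27*B-n3) m3 n3
      (by linarith) (by linarith) (by linarith) (by linarith)
      (by linarith) (by linarith) (by linarith) (by linarith)
  have B4 : V (Int.fract (16*x)) (Int.fract (81*x))
      ≤ min (16*B-(m4:ℝ)) (81*B-(n4:ℝ)) - (16*A-m4)*(81*A-n4) :=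
    V_fract_le (16*x) (81*x) (16*A-m4) (16*B-m4) (81*A-n4) (81*B-n4) m4 n4
      (by linarith) (by linarith) (by linarith) (by linarith)
      (by linarith) (by linarith) (by linarith) (by linarith)
  have B5 : V (Int.fract (32*x)) (Int.fract (243*x))
      ≤ min (32*B-(m5:ℝ)) (243*B-(n5:ℝ)) - (32*A-m5)*(243*A-n5) :=
    V_fract_le (32*x) (243*x) (32*A-m5) (32*B-m5) (243*A-n5) (243*B-n5) m5 n5
      (by linarith) (by linarith) (by linarith) (by linarith)
      (by linarith) (by linarith) (by linarith) (by linarith)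
  have hc := c_lower
  linarith

set_option maxHeartbeats 4000000 in
theorem sigmaSq_lt_on_interval_10 (x : ℝ) (hx : x ∈ Set.Ico (3/8 : ℝ) (11/27)) :
    sigmaSq x < sigmaSq c := by
  obtain ⟨hxl, hxr⟩ := hx
  rcases lt_or_ge x (5471/14580) with h0' | h0
  · exact piece_lt x (3/8) (5471/14580) (0) (1) (1) (3) (3) (10) (6) (30) (12) (91) hxl h0' (by norm_num [min_def])
  rcases lt_or_ge x (10949/29160) with h1' | h1
  · exact piece_lt x (5471/14580) (10949/29160) (0) (1) (1) (3) (3) (10) (6) (30) (12) (91) h0 h1' (by norm_num [min_def])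
  rcases lt_or_ge x (913/2430) with h2' | h2
  · exact piece_lt x (10949/29160) (913/2430) (0) (1) (1) (3) (3) (10) (6) (30) (12) (91) h1 h2' (by norm_num [min_def])
  rcases lt_or_ge x (10963/29160) with h3' | h3
  · exact piece_lt x (913/2430) (10963/29160) (0) (1) (1) (3) (3) (10) (6) (30) (12) (91) h2 h3' (by norm_num [min_def])
  rcases lt_or_ge x (1097/2916) with h4' | h4
  · exact piece_lt x (10963/29160) (1097/2916) (0) (1) (1) (3) (3) (10) (6) (30) (12) (91) h3 h4' (by norm_num [min_def])
  rcases lt_or_ge x (3659/9720) with h5' | h5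
  · exact piece_lt x (1097/2916) (3659/9720) (0) (1) (1) (3) (3) (10) (6) (30) (12) (91) h4 h5' (by norm_num [min_def])
  rcases lt_or_ge x (1373/3645) with h6' | h6
  · exact piece_lt x (3659/9720) (1373/3645) (0) (1) (1) (3) (3) (10) (6) (30) (12) (91) h5 h6' (by norm_num [min_def])
  rcases lt_or_ge x (10991/29160) with h7' | h7
  · exact piece_lt x (1373/3645) (10991/29160) (0) (1) (1) (3) (3) (10) (6) (30) (12) (91) h6 h7' (by norm_num [min_def])
  rcases lt_or_ge x (611/1620) with h8' | h8
  · exact piece_lt x (10991/29160) (611/1620) (0) (1) (1) (3) (3) (10) (6) (30) (12) (91) h7 h8' (by norm_num [min_def])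
  rcases lt_or_ge x (2201/5832) with h9' | h9
  · exact piece_lt x (611/1620) (2201/5832) (0) (1) (1) (3) (3) (10) (6) (30) (12) (91) h8 h9' (by norm_num [min_def])
  rcases lt_or_ge x (2753/7290) with h10' | h10
  · exact piece_lt x (2201/5832) (2753/7290) (0) (1) (1) (3) (3) (10) (6) (30) (12) (91) h9 h10' (by norm_num [min_def])
  rcases lt_or_ge x (3673/9720) with h11' | h11
  · exact piece_lt x (2753/7290) (3673/9720) (0) (1) (1) (3) (3) (10) (6) (30) (12) (91) h10 h11' (by norm_num [min_def])
  rcases lt_or_ge x (5513/14580) with h12' | h12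
  · exact piece_lt x (3673/9720) (5513/14580) (0) (1) (1) (3) (3) (10) (6) (30) (12) (91) h11 h12' (by norm_num [min_def])
  rcases lt_or_ge x (11033/29160) with h13' | h13
  · exact piece_lt x (5513/14580) (11033/29160) (0) (1) (1) (3) (3) (10) (6) (30) (12) (91) h12 h13' (by norm_num [min_def])
  rcases lt_or_ge x (92/243) with h14' | h14
  · exact piece_lt x (11033/29160) (92/243) (0) (1) (1) (3) (3) (10) (6) (30) (12) (91) h13 h14' (by norm_num [min_def])
  rcases lt_or_ge x (1565/4131) with h15' | h15
  · exact piece_lt x (92/243) (1565/4131) (0) (1) (1) (3) (3) (10) (6) (30) (12) (92) h14 h15' (by norm_num [min_def])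
  rcases lt_or_ge x (58/153) with h16' | h16
  · exact piece_lt x (1565/4131) (58/153) (0) (1) (1) (3) (3) (10) (6) (30) (12) (92) h15 h16' (by norm_num [min_def])
  rcases lt_or_ge x (1567/4131) with h17' | h17
  · exact piece_lt x (58/153) (1567/4131) (0) (1) (1) (3) (3) (10) (6) (30) (12) (92) h16 h17' (by norm_num [min_def])
  rcases lt_or_ge x (1568/4131) with h18' | h18
  · exact piece_lt x (1567/4131) (1568/4131) (0) (1) (1) (3) (3) (10) (6) (30) (12) (92) h17 h18' (by norm_num [min_def])
  rcases lt_or_ge x (523/1377) with h19' | h19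
  · exact piece_lt x (1568/4131) (523/1377) (0) (1) (1) (3) (3) (10) (6) (30) (12) (92) h18 h19' (by norm_num [min_def])
  rcases lt_or_ge x (1570/4131) with h20' | h20
  · exact piece_lt x (523/1377) (1570/4131) (0) (1) (1) (3) (3) (10) (6) (30) (12) (92) h19 h20' (by norm_num [min_def])
  rcases lt_or_ge x (1571/4131) with h21' | h21
  · exact piece_lt x (1570/4131) (1571/4131) (0) (1) (1) (3) (3) (10) (6) (30) (12) (92) h20 h21' (by norm_num [min_def])
  rcases lt_or_ge x (524/1377) with h22' | h22
  · exact piece_lt x (1571/4131) (524/1377) (0) (1) (1) (3) (3) (10) (6) (30) (12) (92) h21 h22' (by norm_num [min_def])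
  rcases lt_or_ge x (1573/4131) with h23' | h23
  · exact piece_lt x (524/1377) (1573/4131) (0) (1) (1) (3) (3) (10) (6) (30) (12) (92) h22 h23' (by norm_num [min_def])
  rcases lt_or_ge x (1574/4131) with h24' | h24
  · exact piece_lt x (1573/4131) (1574/4131) (0) (1) (1) (3) (3) (10) (6) (30) (12) (92) h23 h24' (by norm_num [min_def])
  rcases lt_or_ge x (175/459) with h25' | h25
  · exact piece_lt x (1574/4131) (175/459) (0) (1) (1) (3) (3) (10) (6) (30) (12) (92) h24 h25' (by norm_num [min_def])
  rcases lt_or_ge x (1576/4131) with h26' | h26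
  · exact piece_lt x (175/459) (1576/4131) (0) (1) (1) (3) (3) (10) (6) (30) (12) (92) h25 h26' (by norm_num [min_def])
  rcases lt_or_ge x (1577/4131) with h27' | h27
  · exact piece_lt x (1576/4131) (1577/4131) (0) (1) (1) (3) (3) (10) (6) (30) (12) (92) h26 h27' (by norm_num [min_def])
  rcases lt_or_ge x (526/1377) with h28' | h28
  · exact piece_lt x (1577/4131) (526/1377) (0) (1) (1) (3) (3) (10) (6) (30) (12) (92) h27 h28' (by norm_num [min_def])
  rcases lt_or_ge x (1579/4131) with h29' | h29
  · exact piece_lt x (526/1377) (1579/4131) (0) (1) (1) (3) (3) (10) (6) (30) (12) (92) h28 h29' (by norm_num [min_def])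
  rcases lt_or_ge x (1580/4131) with h30' | h30
  · exact piece_lt x (1579/4131) (1580/4131) (0) (1) (1) (3) (3) (10) (6) (30) (12) (92) h29 h30' (by norm_num [min_def])
  rcases lt_or_ge x (31/81) with h31' | h31
  · exact piece_lt x (1580/4131) (31/81) (0) (1) (1) (3) (3) (10) (6) (30) (12) (92) h30 h31' (by norm_num [min_def])
  rcases lt_or_ge x (1582/4131) with h32' | h32
  · exact piece_lt x (31/81) (1582/4131) (0) (1) (1) (3) (3) (10) (6) (31) (12) (93) h31 h32' (by norm_num [min_def])
  rcases lt_or_ge x (1583/4131) with h33' | h33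
  · exact piece_lt x (1582/4131) (1583/4131) (0) (1) (1) (3) (3) (10) (6) (31) (12) (93) h32 h33' (by norm_num [min_def])
  rcases lt_or_ge x (176/459) with h34' | h34
  · exact piece_lt x (1583/4131) (176/459) (0) (1) (1) (3) (3) (10) (6) (31) (12) (93) h33 h34' (by norm_num [min_def])
  rcases lt_or_ge x (1585/4131) with h35' | h35
  · exact piece_lt x (176/459) (1585/4131) (0) (1) (1) (3) (3) (10) (6) (31) (12) (93) h34 h35' (by norm_num [min_def])
  rcases lt_or_ge x (1586/4131) with h36' | h36
  · exact piece_lt x (1585/4131) (1586/4131) (0) (1) (1) (3) (3) (10) (6) (31) (12) (93) h35 h36' (by norm_num [min_def])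
  rcases lt_or_ge x (529/1377) with h37' | h37
  · exact piece_lt x (1586/4131) (529/1377) (0) (1) (1) (3) (3) (10) (6) (31) (12) (93) h36 h37' (by norm_num [min_def])
  rcases lt_or_ge x (1588/4131) with h38' | h38
  · exact piece_lt x (529/1377) (1588/4131) (0) (1) (1) (3) (3) (10) (6) (31) (12) (93) h37 h38' (by norm_num [min_def])
  rcases lt_or_ge x (1589/4131) with h39' | h39
  · exact piece_lt x (1588/4131) (1589/4131) (0) (1) (1) (3) (3) (10) (6) (31) (12) (93) h38 h39' (by norm_num [min_def])
  rcases lt_or_ge x (530/1377) with h40' | h40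
  · exact piece_lt x (1589/4131) (530/1377) (0) (1) (1) (3) (3) (10) (6) (31) (12) (93) h39 h40' (by norm_num [min_def])
  rcases lt_or_ge x (1591/4131) with h41' | h41
  · exact piece_lt x (530/1377) (1591/4131) (0) (1) (1) (3) (3) (10) (6) (31) (12) (93) h40 h41' (by norm_num [min_def])
  rcases lt_or_ge x (1592/4131) with h42' | h42
  · exact piece_lt x (1591/4131) (1592/4131) (0) (1) (1) (3) (3) (10) (6) (31) (12) (93) h41 h42' (by norm_num [min_def])
  rcases lt_or_ge x (59/153) with h43' | h43
  · exact piece_lt x (1592/4131) (59/153) (0) (1) (1) (3) (3) (10) (6) (31) (12) (93) h42 h43' (by norm_num [min_def])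
  rcases lt_or_ge x (1594/4131) with h44' | h44
  · exact piece_lt x (59/153) (1594/4131) (0) (1) (1) (3) (3) (10) (6) (31) (12) (93) h43 h44' (by norm_num [min_def])
  rcases lt_or_ge x (1595/4131) with h45' | h45
  · exact piece_lt x (1594/4131) (1595/4131) (0) (1) (1) (3) (3) (10) (6) (31) (12) (93) h44 h45' (by norm_num [min_def])
  rcases lt_or_ge x (532/1377) with h46' | h46
  · exact piece_lt x (1595/4131) (532/1377) (0) (1) (1) (3) (3) (10) (6) (31) (12) (93) h45 h46' (by norm_num [min_def])
  rcases lt_or_ge x (1597/4131) with h47' | h47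
  · exact piece_lt x (532/1377) (1597/4131) (0) (1) (1) (3) (3) (10) (6) (31) (12) (93) h46 h47' (by norm_num [min_def])
  rcases lt_or_ge x (94/243) with h48' | h48
  · exact piece_lt x (1597/4131) (94/243) (0) (1) (1) (3) (3) (10) (6) (31) (12) (93) h47 h48' (by norm_num [min_def])
  rcases lt_or_ge x (533/1377) with h49' | h49
  · exact piece_lt x (94/243) (533/1377) (0) (1) (1) (3) (3) (10) (6) (31) (12) (94) h48 h49' (by norm_num [min_def])
  rcases lt_or_ge x (1600/4131) with h50' | h50
  · exact piece_lt x (533/1377) (1600/4131) (0) (1) (1) (3) (3) (10) (6) (31) (12) (94) h49 h50' (by norm_num [min_def])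
  rcases lt_or_ge x (1601/4131) with h51' | h51
  · exact piece_lt x (1600/4131) (1601/4131) (0) (1) (1) (3) (3) (10) (6) (31) (12) (94) h50 h51' (by norm_num [min_def])
  rcases lt_or_ge x (178/459) with h52' | h52
  · exact piece_lt x (1601/4131) (178/459) (0) (1) (1) (3) (3) (10) (6) (31) (12) (94) h51 h52' (by norm_num [min_def])
  rcases lt_or_ge x (1603/4131) with h53' | h53
  · exact piece_lt x (178/459) (1603/4131) (0) (1) (1) (3) (3) (10) (6) (31) (12) (94) h52 h53' (by norm_num [min_def])
  rcases lt_or_ge x (1604/4131) with h54' | h54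
  · exact piece_lt x (1603/4131) (1604/4131) (0) (1) (1) (3) (3) (10) (6) (31) (12) (94) h53 h54' (by norm_num [min_def])
  rcases lt_or_ge x (535/1377) with h55' | h55
  · exact piece_lt x (1604/4131) (535/1377) (0) (1) (1) (3) (3) (10) (6) (31) (12) (94) h54 h55' (by norm_num [min_def])
  rcases lt_or_ge x (1606/4131) with h56' | h56
  · exact piece_lt x (535/1377) (1606/4131) (0) (1) (1) (3) (3) (10) (6) (31) (12) (94) h55 h56' (by norm_num [min_def])
  rcases lt_or_ge x (1607/4131) with h57' | h57
  · exact piece_lt x (1606/4131) (1607/4131) (0) (1) (1) (3) (3) (10) (6) (31) (12) (94) h56 h57' (by norm_num [min_def])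
  rcases lt_or_ge x (536/1377) with h58' | h58
  · exact piece_lt x (1607/4131) (536/1377) (0) (1) (1) (3) (3) (10) (6) (31) (12) (94) h57 h58' (by norm_num [min_def])
  rcases lt_or_ge x (1609/4131) with h59' | h59
  · exact piece_lt x (536/1377) (1609/4131) (0) (1) (1) (3) (3) (10) (6) (31) (12) (94) h58 h59' (by norm_num [min_def])
  rcases lt_or_ge x (1610/4131) with h60' | h60
  · exact piece_lt x (1609/4131) (1610/4131) (0) (1) (1) (3) (3) (10) (6) (31) (12) (94) h59 h60' (by norm_num [min_def])
  rcases lt_or_ge x (179/459) with h61' | h61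
  · exact piece_lt x (1610/4131) (179/459) (0) (1) (1) (3) (3) (10) (6) (31) (12) (94) h60 h61' (by norm_num [min_def])
  rcases lt_or_ge x (1612/4131) with h62' | h62
  · exact piece_lt x (179/459) (1612/4131) (0) (1) (1) (3) (3) (10) (6) (31) (12) (94) h61 h62' (by norm_num [min_def])
  rcases lt_or_ge x (1613/4131) with h63' | h63
  · exact piece_lt x (1612/4131) (1613/4131) (0) (1) (1) (3) (3) (10) (6) (31) (12) (94) h62 h63' (by norm_num [min_def])
  rcases lt_or_ge x (538/1377) with h64' | h64
  · exact piece_lt x (1613/4131) (538/1377) (0) (1) (1) (3) (3) (10) (6) (31) (12) (94) h63 h64' (by norm_num [min_def])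
  rcases lt_or_ge x (95/243) with h65' | h65
  · exact piece_lt x (538/1377) (95/243) (0) (1) (1) (3) (3) (10) (6) (31) (12) (94) h64 h65' (by norm_num [min_def])
  rcases lt_or_ge x (1616/4131) with h66' | h66
  · exact piece_lt x (95/243) (1616/4131) (0) (1) (1) (3) (3) (10) (6) (31) (12) (95) h65 h66' (by norm_num [min_def])
  rcases lt_or_ge x (539/1377) with h67' | h67
  · exact piece_lt x (1616/4131) (539/1377) (0) (1) (1) (3) (3) (10) (6) (31) (12) (95) h66 h67' (by norm_num [min_def])
  rcases lt_or_ge x (1618/4131) with h68' | h68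
  · exact piece_lt x (539/1377) (1618/4131) (0) (1) (1) (3) (3) (10) (6) (31) (12) (95) h67 h68' (by norm_num [min_def])
  rcases lt_or_ge x (1619/4131) with h69' | h69
  · exact piece_lt x (1618/4131) (1619/4131) (0) (1) (1) (3) (3) (10) (6) (31) (12) (95) h68 h69' (by norm_num [min_def])
  rcases lt_or_ge x (20/51) with h70' | h70
  · exact piece_lt x (1619/4131) (20/51) (0) (1) (1) (3) (3) (10) (6) (31) (12) (95) h69 h70' (by norm_num [min_def])
  rcases lt_or_ge x (1621/4131) with h71' | h71
  · exact piece_lt x (20/51) (1621/4131) (0) (1) (1) (3) (3) (10) (6) (31) (12) (95) h70 h71' (by norm_num [min_def])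
  rcases lt_or_ge x (1622/4131) with h72' | h72
  · exact piece_lt x (1621/4131) (1622/4131) (0) (1) (1) (3) (3) (10) (6) (31) (12) (95) h71 h72' (by norm_num [min_def])
  rcases lt_or_ge x (541/1377) with h73' | h73
  · exact piece_lt x (1622/4131) (541/1377) (0) (1) (1) (3) (3) (10) (6) (31) (12) (95) h72 h73' (by norm_num [min_def])
  rcases lt_or_ge x (1624/4131) with h74' | h74
  · exact piece_lt x (541/1377) (1624/4131) (0) (1) (1) (3) (3) (10) (6) (31) (12) (95) h73 h74' (by norm_num [min_def])
  rcases lt_or_ge x (1625/4131) with h75' | h75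
  · exact piece_lt x (1624/4131) (1625/4131) (0) (1) (1) (3) (3) (10) (6) (31) (12) (95) h74 h75' (by norm_num [min_def])
  rcases lt_or_ge x (542/1377) with h76' | h76
  · exact piece_lt x (1625/4131) (542/1377) (0) (1) (1) (3) (3) (10) (6) (31) (12) (95) h75 h76' (by norm_num [min_def])
  rcases lt_or_ge x (1627/4131) with h77' | h77
  · exact piece_lt x (542/1377) (1627/4131) (0) (1) (1) (3) (3) (10) (6) (31) (12) (95) h76 h77' (by norm_num [min_def])
  rcases lt_or_ge x (1628/4131) with h78' | h78
  · exact piece_lt x (1627/4131) (1628/4131) (0) (1) (1) (3) (3) (10) (6) (31) (12) (95) h77 h78' (by norm_num [min_def])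
  rcases lt_or_ge x (181/459) with h79' | h79
  · exact piece_lt x (1628/4131) (181/459) (0) (1) (1) (3) (3) (10) (6) (31) (12) (95) h78 h79' (by norm_num [min_def])
  rcases lt_or_ge x (1630/4131) with h80' | h80
  · exact piece_lt x (181/459) (1630/4131) (0) (1) (1) (3) (3) (10) (6) (31) (12) (95) h79 h80' (by norm_num [min_def])
  rcases lt_or_ge x (1631/4131) with h81' | h81
  · exact piece_lt x (1630/4131) (1631/4131) (0) (1) (1) (3) (3) (10) (6) (31) (12) (95) h80 h81' (by norm_num [min_def])
  rcases lt_or_ge x (32/81) with h82' | h82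
  · exact piece_lt x (1631/4131) (32/81) (0) (1) (1) (3) (3) (10) (6) (31) (12) (95) h81 h82' (by norm_num [min_def])
  rcases lt_or_ge x (1633/4131) with h83' | h83
  · exact piece_lt x (32/81) (1633/4131) (0) (1) (1) (3) (3) (10) (6) (32) (12) (96) h82 h83' (by norm_num [min_def])
  rcases lt_or_ge x (1634/4131) with h84' | h84
  · exact piece_lt x (1633/4131) (1634/4131) (0) (1) (1) (3) (3) (10) (6) (32) (12) (96) h83 h84' (by norm_num [min_def])
  rcases lt_or_ge x (545/1377) with h85' | h85
  · exact piece_lt x (1634/4131) (545/1377) (0) (1) (1) (3) (3) (10) (6) (32) (12) (96) h84 h85' (by norm_num [min_def])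
  rcases lt_or_ge x (1636/4131) with h86' | h86
  · exact piece_lt x (545/1377) (1636/4131) (0) (1) (1) (3) (3) (10) (6) (32) (12) (96) h85 h86' (by norm_num [min_def])
  rcases lt_or_ge x (1637/4131) with h87' | h87
  · exact piece_lt x (1636/4131) (1637/4131) (0) (1) (1) (3) (3) (10) (6) (32) (12) (96) h86 h87' (by norm_num [min_def])
  rcases lt_or_ge x (182/459) with h88' | h88
  · exact piece_lt x (1637/4131) (182/459) (0) (1) (1) (3) (3) (10) (6) (32) (12) (96) h87 h88' (by norm_num [min_def])
  rcases lt_or_ge x (1639/4131) with h89' | h89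
  · exact piece_lt x (182/459) (1639/4131) (0) (1) (1) (3) (3) (10) (6) (32) (12) (96) h88 h89' (by norm_num [min_def])
  rcases lt_or_ge x (1640/4131) with h90' | h90
  · exact piece_lt x (1639/4131) (1640/4131) (0) (1) (1) (3) (3) (10) (6) (32) (12) (96) h89 h90' (by norm_num [min_def])
  rcases lt_or_ge x (547/1377) with h91' | h91
  · exact piece_lt x (1640/4131) (547/1377) (0) (1) (1) (3) (3) (10) (6) (32) (12) (96) h90 h91' (by norm_num [min_def])
  rcases lt_or_ge x (1642/4131) with h92' | h92
  · exact piece_lt x (547/1377) (1642/4131) (0) (1) (1) (3) (3) (10) (6) (32) (12) (96) h91 h92' (by norm_num [min_def])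
  rcases lt_or_ge x (1643/4131) with h93' | h93
  · exact piece_lt x (1642/4131) (1643/4131) (0) (1) (1) (3) (3) (10) (6) (32) (12) (96) h92 h93' (by norm_num [min_def])
  rcases lt_or_ge x (548/1377) with h94' | h94
  · exact piece_lt x (1643/4131) (548/1377) (0) (1) (1) (3) (3) (10) (6) (32) (12) (96) h93 h94' (by norm_num [min_def])
  rcases lt_or_ge x (1645/4131) with h95' | h95
  · exact piece_lt x (548/1377) (1645/4131) (0) (1) (1) (3) (3) (10) (6) (32) (12) (96) h94 h95' (by norm_num [min_def])
  rcases lt_or_ge x (1646/4131) with h96' | h96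
  · exact piece_lt x (1645/4131) (1646/4131) (0) (1) (1) (3) (3) (10) (6) (32) (12) (96) h95 h96' (by norm_num [min_def])
  rcases lt_or_ge x (61/153) with h97' | h97
  · exact piece_lt x (1646/4131) (61/153) (0) (1) (1) (3) (3) (10) (6) (32) (12) (96) h96 h97' (by norm_num [min_def])
  rcases lt_or_ge x (1648/4131) with h98' | h98
  · exact piece_lt x (61/153) (1648/4131) (0) (1) (1) (3) (3) (10) (6) (32) (12) (96) h97 h98' (by norm_num [min_def])
  rcases lt_or_ge x (97/243) with h99' | h99
  · exact piece_lt x (1648/4131) (97/243) (0) (1) (1) (3) (3) (10) (6) (32) (12) (96) h98 h99' (by norm_num [min_def])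
  rcases lt_or_ge x (550/1377) with h100' | h100
  · exact piece_lt x (97/243) (550/1377) (0) (1) (1) (3) (3) (10) (6) (32) (12) (97) h99 h100' (by norm_num [min_def])
  rcases lt_or_ge x (1651/4131) with h101' | h101
  · exact piece_lt x (550/1377) (1651/4131) (0) (1) (1) (3) (3) (10) (6) (32) (12) (97) h100 h101' (by norm_num [min_def])
  rcases lt_or_ge x (1652/4131) with h102' | h102
  · exact piece_lt x (1651/4131) (1652/4131) (0) (1) (1) (3) (3) (10) (6) (32) (12) (97) h101 h102' (by norm_num [min_def])
  rcases lt_or_ge x (551/1377) with h103' | h103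
  · exact piece_lt x (1652/4131) (551/1377) (0) (1) (1) (3) (3) (10) (6) (32) (12) (97) h102 h103' (by norm_num [min_def])
  rcases lt_or_ge x (1654/4131) with h104' | h104
  · exact piece_lt x (551/1377) (1654/4131) (0) (1) (1) (3) (3) (10) (6) (32) (12) (97) h103 h104' (by norm_num [min_def])
  rcases lt_or_ge x (1655/4131) with h105' | h105
  · exact piece_lt x (1654/4131) (1655/4131) (0) (1) (1) (3) (3) (10) (6) (32) (12) (97) h104 h105' (by norm_num [min_def])
  rcases lt_or_ge x (184/459) with h106' | h106
  · exact piece_lt x (1655/4131) (184/459) (0) (1) (1) (3) (3) (10) (6) (32) (12) (97) h105 h106' (by norm_num [min_def])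
  rcases lt_or_ge x (1657/4131) with h107' | h107
  · exact piece_lt x (184/459) (1657/4131) (0) (1) (1) (3) (3) (10) (6) (32) (12) (97) h106 h107' (by norm_num [min_def])
  rcases lt_or_ge x (1658/4131) with h108' | h108
  · exact piece_lt x (1657/4131) (1658/4131) (0) (1) (1) (3) (3) (10) (6) (32) (12) (97) h107 h108' (by norm_num [min_def])
  rcases lt_or_ge x (553/1377) with h109' | h109
  · exact piece_lt x (1658/4131) (553/1377) (0) (1) (1) (3) (3) (10) (6) (32) (12) (97) h108 h109' (by norm_num [min_def])
  rcases lt_or_ge x (1660/4131) with h110' | h110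
  · exact piece_lt x (553/1377) (1660/4131) (0) (1) (1) (3) (3) (10) (6) (32) (12) (97) h109 h110' (by norm_num [min_def])
  rcases lt_or_ge x (1661/4131) with h111' | h111
  · exact piece_lt x (1660/4131) (1661/4131) (0) (1) (1) (3) (3) (10) (6) (32) (12) (97) h110 h111' (by norm_num [min_def])
  rcases lt_or_ge x (554/1377) with h112' | h112
  · exact piece_lt x (1661/4131) (554/1377) (0) (1) (1) (3) (3) (10) (6) (32) (12) (97) h111 h112' (by norm_num [min_def])
  rcases lt_or_ge x (1663/4131) with h113' | h113
  · exact piece_lt x (554/1377) (1663/4131) (0) (1) (1) (3) (3) (10) (6) (32) (12) (97) h112 h113' (by norm_num [min_def])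
  rcases lt_or_ge x (1664/4131) with h114' | h114
  · exact piece_lt x (1663/4131) (1664/4131) (0) (1) (1) (3) (3) (10) (6) (32) (12) (97) h113 h114' (by norm_num [min_def])
  rcases lt_or_ge x (185/459) with h115' | h115
  · exact piece_lt x (1664/4131) (185/459) (0) (1) (1) (3) (3) (10) (6) (32) (12) (97) h114 h115' (by norm_num [min_def])
  rcases lt_or_ge x (98/243) with h116' | h116
  · exact piece_lt x (185/459) (98/243) (0) (1) (1) (3) (3) (10) (6) (32) (12) (97) h115 h116' (by norm_num [min_def])
  rcases lt_or_ge x (37655/93312) with h117' | h117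
  · exact piece_lt x (98/243) (37655/93312) (0) (1) (1) (3) (3) (10) (6) (32) (12) (98) h116 h117' (by norm_num [min_def])
  rcases lt_or_ge x (18839/46656) with h118' | h118
  · exact piece_lt x (37655/93312) (18839/46656) (0) (1) (1) (3) (3) (10) (6) (32) (12) (98) h117 h118' (by norm_num [min_def])
  rcases lt_or_ge x (4189/10368) with h119' | h119
  · exact piece_lt x (18839/46656) (4189/10368) (0) (1) (1) (3) (3) (10) (6) (32) (12) (98) h118 h119' (by norm_num [min_def])
  rcases lt_or_ge x (9431/23328) with h120' | h120
  · exact piece_lt x (4189/10368) (9431/23328) (0) (1) (1) (3) (3) (10) (6) (32) (12) (98) h119 h120' (by norm_num [min_def])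
  rcases lt_or_ge x (37747/93312) with h121' | h121
  · exact piece_lt x (9431/23328) (37747/93312) (0) (1) (1) (3) (3) (10) (6) (32) (12) (98) h120 h121' (by norm_num [min_def])
  rcases lt_or_ge x (6295/15552) with h122' | h122
  · exact piece_lt x (37747/93312) (6295/15552) (0) (1) (1) (3) (3) (10) (6) (32) (12) (98) h121 h122' (by norm_num [min_def])
  rcases lt_or_ge x (37793/93312) with h123' | h123
  · exact piece_lt x (6295/15552) (37793/93312) (0) (1) (1) (3) (3) (10) (6) (32) (12) (98) h122 h123' (by norm_num [min_def])
  rcases lt_or_ge x (4727/11664) with h124' | h124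
  · exact piece_lt x (37793/93312) (4727/11664) (0) (1) (1) (3) (3) (10) (6) (32) (12) (98) h123 h124' (by norm_num [min_def])
  rcases lt_or_ge x (12613/31104) with h125' | h125
  · exact piece_lt x (4727/11664) (12613/31104) (0) (1) (1) (3) (3) (10) (6) (32) (12) (98) h124 h125' (by norm_num [min_def])
  rcases lt_or_ge x (18931/46656) with h126' | h126
  · exact piece_lt x (12613/31104) (18931/46656) (0) (1) (1) (3) (3) (10) (6) (32) (12) (98) h125 h126' (by norm_num [min_def])
  rcases lt_or_ge x (37885/93312) with h127' | h127
  · exact piece_lt x (18931/46656) (37885/93312) (0) (1) (1) (3) (3) (10) (6) (32) (12) (98) h126 h127' (by norm_num [min_def])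
  rcases lt_or_ge x (13/32) with h128' | h128
  · exact piece_lt x (37885/93312) (13/32) (0) (1) (1) (3) (3) (10) (6) (32) (12) (98) h127 h128' (by norm_num [min_def])
  rcases lt_or_ge x (439/1080) with h129' | h129
  · exact piece_lt x (13/32) (439/1080) (0) (1) (1) (3) (3) (10) (6) (32) (13) (98) h128 h129' (by norm_num [min_def])
  rcases lt_or_ge x (1757/4320) with h130' | h130
  · exact piece_lt x (439/1080) (1757/4320) (0) (1) (1) (3) (3) (10) (6) (32) (13) (98) h129 h130' (by norm_num [min_def])
  rcases lt_or_ge x (293/720) with h131' | h131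
  · exact piece_lt x (1757/4320) (293/720) (0) (1) (1) (3) (3) (10) (6) (32) (13) (98) h130 h131' (by norm_num [min_def])
  rcases lt_or_ge x (1759/4320) with h132' | h132
  · exact piece_lt x (293/720) (1759/4320) (0) (1) (1) (3) (3) (10) (6) (32) (13) (98) h131 h132' (by norm_num [min_def])
  exact piece_lt x (1759/4320) (11/27) (0) (1) (1) (3) (3) (10) (6) (32) (13) (98) h132 hxr (by norm_num [min_def])
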